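/- Let (C_x, C_y) be a progressive pair of m×m matrices over GF(2), let U be upper unitriangular, and let L_x, L_y be lower unitriangular. Then (L_x C_x U, L_y C_y U) is also a progressive pair. -/

import Mathlib

open Matrix Finset

/-- The binary Pascal matrix over GF(2): entries C(j-1, i-1) mod 2 (1-indexed),
i.e. C(j, i) with 0-indexed `Fin`. -/
def pascal (m : ℕ) : Matrix (Fin m) (Fin m) (ZMod 2) :=
  fun i j => (Nat.choose j.val i.val : ZMod 2)

/-- The anti-diagonal matrix over GF(2), with ones on the anti-diagonal. -/
def antiDiag (m : ℕ) : Matrix (Fin m) (Fin m) (ZMod 2) :=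
  fun i j => if i.val + j.val + 1 = m then 1 else 0
/-- Lower unitriangular matrix over GF(2). -/
def IsLowerUni {m : ℕ} (L : Matrix (Fin m) (Fin m) (ZMod 2)) : Prop :=
  (∀ i, L i i = 1) ∧ ∀ i j : Fin m, i < j → L i j = 0

/-- Upper unitriangular matrix over GF(2). -/
def IsUpperUni {m : ℕ} (U : Matrix (Fin m) (Fin m) (ZMod 2)) : Prop :=
  (∀ i, U i i = 1) ∧ ∀ i j : Fin m, j < i → U i j = 0
/-- The hybrid matrix whose first `m - r` rows are the first `m - r` rows of `Cx`
and whose last `r` rows are the first `r` rows of `Cy`. -/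
def hybrid (m r : ℕ) (Cx Cy : Matrix (Fin m) (Fin m) (ZMod 2)) :
    Matrix (Fin m) (Fin m) (ZMod 2) :=
  fun i j =>
    if i.val < m - r then Cx i j
    else Cy ⟨i.val - (m - r), Nat.lt_of_le_of_lt (Nat.sub_le _ _) i.isLt⟩ j

/-- A dyadic pair: all hybrid matrices are invertible. -/
def DyadicPair {m : ℕ} (Cx Cy : Matrix (Fin m) (Fin m) (ZMod 2)) : Prop :=
  ∀ r ≤ m, (hybrid m r Cx Cy).det ≠ 0
/-- A progressive pair: for all `r ≤ k ≤ m`, the hybrid matrix built from the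
leading `k × k` blocks of `Cx` and `Cy` is invertible. -/
def ProgressivePair {m : ℕ} (Cx Cy : Matrix (Fin m) (Fin m) (ZMod 2)) : Prop :=
  ∀ k, ∀ hk : k ≤ m, ∀ r ≤ k,
    (hybrid k r (Cx.submatrix (Fin.castLE hk) (Fin.castLE hk))
                (Cy.submatrix (Fin.castLE hk) (Fin.castLE hk))).det ≠ 0

lemma sum_restrict {k m : ℕ} (hk : k ≤ m) (f : Fin m → ZMod 2)
    (h0 : ∀ q : Fin m, k ≤ q.val → f q = 0) :
    ∑ q : Fin m, f q = ∑ q : Fin k, f (Fin.castLE hk q) := by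
  have h1 : ∑ q : Fin m, f q = ∑ i ∈ range m, (fun n => if h : n < m then f ⟨n, h⟩ else 0) i := by
    rw [← Fin.sum_univ_eq_sum_range]
    exact Finset.sum_congr rfl (fun q _ => by simp)
  have h2 : ∑ q : Fin k, f (Fin.castLE hk q)
      = ∑ i ∈ range k, (fun n => if h : n < m then f ⟨n, h⟩ else 0) i := by
    rw [← Fin.sum_univ_eq_sum_range]
    exact Finset.sum_congr rfl (fun q _ => by
      rw [dif_pos (lt_of_lt_of_le q.isLt hk)]
      rfl)
  rw [h1, h2]
  symm
  apply Finset.sum_subset (Finset.range_subset_range.mpr hk)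
  intro n hn hnk
  simp only [mem_range] at hn hnk
  rw [dif_pos hn]
  exact h0 _ (le_of_not_gt hnk)

/-- Taking the leading `k × k` block commutes with right multiplication by a
matrix vanishing below the diagonal. -/
lemma submatrix_mul_upper {m k : ℕ} (hk : k ≤ m)
    (M U : Matrix (Fin m) (Fin m) (ZMod 2))
    (hU : ∀ i j : Fin m, j < i → U i j = 0) :
    (M * U).submatrix (Fin.castLE hk) (Fin.castLE hk)
      = M.submatrix (Fin.castLE hk) (Fin.castLE hk)
        * U.submatrix (Fin.castLE hk) (Fin.castLE hk) := by
  ext i j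
  simp only [submatrix_apply, mul_apply]
  apply sum_restrict hk (fun q => M (Fin.castLE hk i) q * U q (Fin.castLE hk j))
  intro q hq
  rw [hU q (Fin.castLE hk j) (by rw [Fin.lt_def]; simpa using lt_of_lt_of_le j.isLt hq), mul_zero]

lemma hybrid_mul_right {k : ℕ} (r : ℕ) (A B Q : Matrix (Fin k) (Fin k) (ZMod 2)) :
    hybrid k r (A * Q) (B * Q) = hybrid k r A B * Q := by
  ext i j
  by_cases h : i.val < k - r <;> simp [hybrid, mul_apply, h]

/-- The block-diagonal lower unitriangular matrix acting on hybrid rows. -/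
def blockL (m k r : ℕ) (hk : k ≤ m) (Lx Ly : Matrix (Fin m) (Fin m) (ZMod 2)) :
    Matrix (Fin k) (Fin k) (ZMod 2) :=
  fun i j =>
    if i.val < k - r then
      (if j.val < k - r then Lx (Fin.castLE hk i) (Fin.castLE hk j) else 0)
    else
      (if j.val < k - r then 0 else
        Ly ⟨i.val - (k - r), lt_of_le_of_lt (Nat.sub_le _ _) (lt_of_lt_of_le i.isLt hk)⟩
           ⟨j.val - (k - r), lt_of_le_of_lt (Nat.sub_le _ _) (lt_of_lt_of_le j.isLt hk)⟩)

lemma blockL_det {m k r : ℕ} (hk : k ≤ m) (hr : r ≤ k)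
    (Lx Ly : Matrix (Fin m) (Fin m) (ZMod 2))
    (hLx : IsLowerUni Lx) (hLy : IsLowerUni Ly) :
    (blockL m k r hk Lx Ly).det = 1 := by
  rw [Matrix.det_of_lowerTriangular]
  · apply Finset.prod_eq_one
    intro i _
    simp only [blockL]
    split_ifs with h
    · exact hLx.1 _
    · exact hLy.1 _
  · intro i j hij
    simp only [OrderDual.toDual_lt_toDual] at hij
    simp only [blockL]
    split_ifs with h1 h2 h2
    · exact hLx.2 _ _ (by exact hij)
    · rfl
    · rfl
    · apply hLy.2
      simp only [Fin.mk_lt_mk]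
      omega

lemma hybrid_left_mul {m k r : ℕ} (hk : k ≤ m) (hr : r ≤ k)
    (Lx Ly Cx Cy : Matrix (Fin m) (Fin m) (ZMod 2))
    (hLx : ∀ i j : Fin m, i < j → Lx i j = 0)
    (hLy : ∀ i j : Fin m, i < j → Ly i j = 0) :
    hybrid k r ((Lx * Cx).submatrix (Fin.castLE hk) (Fin.castLE hk))
               ((Ly * Cy).submatrix (Fin.castLE hk) (Fin.castLE hk))
      = blockL m k r hk Lx Ly
        * hybrid k r (Cx.submatrix (Fin.castLE hk) (Fin.castLE hk))
                     (Cy.submatrix (Fin.castLE hk) (Fin.castLE hk)) := by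
  ext i j
  by_cases h : i.val < k - r
  · simp only [hybrid, mul_apply, submatrix_apply, blockL, if_pos h]
    rw [sum_restrict hk (fun q => Lx (Fin.castLE hk i) q * Cx q (Fin.castLE hk j))
      (fun q hq => by
        show Lx (Fin.castLE hk i) q * Cx q (Fin.castLE hk j) = 0
        rw [hLx (Fin.castLE hk i) q (by rw [Fin.lt_def]; simpa using lt_of_lt_of_le i.isLt hq), zero_mul])]
    refine Finset.sum_congr rfl (fun l _ => ?_)
    by_cases hl : l.val < k - r
    · rw [if_pos hl, if_pos hl]
    · rw [if_neg hl, if_neg hl, zero_mul,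
        hLx (Fin.castLE hk i) (Fin.castLE hk l)
          (by simp only [Fin.lt_def, Fin.coe_castLE]; omega), zero_mul]
  · simp only [hybrid, mul_apply, submatrix_apply, blockL, if_neg h]
    set a : Fin m := ⟨i.val - (k - r),
      lt_of_le_of_lt (Nat.sub_le _ _) (lt_of_lt_of_le i.isLt hk)⟩ with ha
    have haval : a.val < r := by simp only [ha]; omega
    set f : ℕ → ZMod 2 :=
      fun n => if hn : n < m then Ly a ⟨n, hn⟩ * Cy ⟨n, hn⟩ (Fin.castLE hk j) else 0 with hf
    have hfz : ∀ n, r ≤ n → f n = 0 := by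
      intro n hn
      simp only [hf]
      split_ifs with hnm
      · rw [hLy a ⟨n, hnm⟩ (by simp only [Fin.lt_def]; omega), zero_mul]
      · rfl
    have hL : ∑ q : Fin m, Ly a q * Cy q (Fin.castLE hk j) = ∑ n ∈ range r, f n := by
      have e1 : ∑ q : Fin m, Ly a q * Cy q (Fin.castLE hk j) = ∑ n ∈ range m, f n := by
        rw [← Fin.sum_univ_eq_sum_range]
        refine Finset.sum_congr rfl (fun q _ => ?_)
        simp only [hf]
        rw [dif_pos q.isLt]
      rw [e1]
      symm
      refine Finset.sum_subset (Finset.range_subset_range.mpr (le_trans hr hk)) ?_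
      intro n hn hnr
      simp only [Finset.mem_range] at hnr
      exact hfz n (le_of_not_gt hnr)
    set g : ℕ → ZMod 2 := fun n => if n < k - r then 0 else f (n - (k - r)) with hg
    have hR : ∀ l : Fin k,
        (if l.val < k - r then 0 else Ly a
            ⟨l.val - (k - r), lt_of_le_of_lt (Nat.sub_le _ _) (lt_of_lt_of_le l.isLt hk)⟩)
          * (if l.val < k - r then Cx (Fin.castLE hk l) (Fin.castLE hk j)
             else Cy (Fin.castLE hk ⟨l.val - (k - r),
               lt_of_le_of_lt (Nat.sub_le _ _) l.isLt⟩) (Fin.castLE hk j)) = g l.val := by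
      intro l
      by_cases hl : l.val < k - r
      · rw [if_pos hl, if_pos hl, zero_mul, hg]
        simp [hl]
      · rw [if_neg hl, if_neg hl, hg]
        simp only [if_neg hl, hf]
        rw [dif_pos (show l.val - (k - r) < m from
          lt_of_le_of_lt (Nat.sub_le _ _) (lt_of_lt_of_le l.isLt hk))]
        rfl
    have hsum : ∑ l : Fin k, g l.val = ∑ n ∈ range r, f n := by
      rw [Fin.sum_univ_eq_sum_range g k]
      rw [Finset.range_eq_Ico, ← Finset.sum_Ico_consecutive _ (Nat.zero_le (k - r))
        (Nat.sub_le k r)]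
      have h1 : ∑ n ∈ Finset.Ico 0 (k - r), g n = 0 := by
        apply Finset.sum_eq_zero
        intro n hn
        simp only [Finset.mem_Ico] at hn
        simp [hg, hn.2]
      rw [h1, zero_add, Finset.sum_Ico_eq_sum_range]
      have h2 : k - (k - r) = r := by omega
      rw [h2]
      refine Finset.sum_congr rfl (fun n hn => ?_)
      simp only [hg, Nat.add_sub_cancel_left, if_neg (by omega : ¬ k - r + n < k - r)]
    refine hL.trans ?_
    rw [← hsum]
    exact (Finset.sum_congr rfl (fun l _ => hR l)).symm

/-- Progressive pairs are preserved by left multiplication by lower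
unitriangular matrices and simultaneous right multiplication by an upper
unitriangular matrix. -/
theorem progressivePair_mul (m : ℕ)
    (Cx Cy U Lx Ly : Matrix (Fin m) (Fin m) (ZMod 2))
    (hp : ProgressivePair Cx Cy) (hU : IsUpperUni U)
    (hLx : IsLowerUni Lx) (hLy : IsLowerUni Ly) :
    ProgressivePair (Lx * Cx * U) (Ly * Cy * U) := by
  intro k hk r hr
  rw [submatrix_mul_upper hk (Lx * Cx) U hU.2,
    submatrix_mul_upper hk (Ly * Cy) U hU.2, hybrid_mul_right,
    hybrid_left_mul hk hr Lx Ly Cx Cy hLx.2 hLy.2, Matrix.det_mul, Matrix.det_mul,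
    blockL_det hk hr Lx Ly hLx hLy, one_mul]
  have hUdet : (U.submatrix (Fin.castLE hk) (Fin.castLE hk)).det = 1 := by
    rw [Matrix.det_of_upperTriangular]
    · exact Finset.prod_eq_one (fun i _ => hU.1 _)
    · intro i j hij
      exact hU.2 _ _ hij
  rw [hUdet, mul_one]
  exact hp k hk r hr
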